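/- Let 𝒢 be a second countable locally compact Hausdorff étale groupoid. If g ∈ C_c(𝒢) is supported on a single bisection and f ∈ B_{0,l}(𝒢), then the convolution g*f belongs to B_{0,l}(𝒢); likewise, if g ∈ B_{0,l}(𝒢) and f ∈ C_c(𝒢) is supported on a single bisection, then g*f belongs to B_{0,l}(𝒢). (Here h ∈ B_{0,l}(𝒢) if and only if h* ∈ B_{0,l}(𝒢).) -/

import Mathlib

open scoped BigOperators ComplexConjugate ENNReal NNReal
open MeasureTheory Filter Topology

noncomputable section

instance : Fact ((1 : ℝ≥0∞) ≤ 2) := ⟨one_le_two⟩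

/-- The ambient separable Hilbert space `ℓ²(ℕ, ℂ)`, in which the fibres of any
Borel Hilbert bundle with a fundamental sequence may be realized. -/
abbrev Hamb : Type := lp (fun _ : ℕ => ℂ) 2

instance : MeasurableSpace Hamb := borel _
instance : BorelSpace Hamb := ⟨rfl⟩

/-- A bounded complex-valued function. -/
def BddFun {X : Type} (f : X → ℂ) : Prop := ∃ M : ℝ, ∀ x, ‖f x‖ ≤ M

/-- A (second countable locally compact Hausdorff) étale groupoid: a groupoid structure
on `G` (with total operations, the product being meaningful on composable pairs
`s x = r y`), such that inversion and multiplication are continuous and the range map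
is a local homeomorphism.  The standing topological assumptions (Hausdorff, second
countable, locally compact) are imposed as typeclass assumptions in the theorems. -/
structure EtaleGroupoid (G : Type) [TopologicalSpace G] where
  mul : G → G → G
  inv : G → G
  r : G → G
  s : G → G
  r_def : ∀ x, r x = mul x (inv x)
  s_def : ∀ x, s x = mul (inv x) x
  inv_inv : ∀ x, inv (inv x) = x
  s_inv : ∀ x, s (inv x) = r x
  mul_assoc' : ∀ x y z, s x = r y → s y = r z → mul (mul x y) z = mul x (mul y z)
  r_mul : ∀ x y, s x = r y → r (mul x y) = r x
  s_mul : ∀ x y, s x = r y → s (mul x y) = s y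
  inv_mul_cancel' : ∀ x y, s x = r y → mul (inv x) (mul x y) = y
  mul_inv_cancel' : ∀ x y, s x = r y → mul (mul x y) (inv y) = x
  continuous_inv : Continuous inv
  continuous_r : Continuous r
  continuous_s : Continuous s
  continuous_mul : ∀ x y : G, s x = r y → ∀ W : Set G, IsOpen W → mul x y ∈ W →
    ∃ U V : Set G, IsOpen U ∧ IsOpen V ∧ x ∈ U ∧ y ∈ V ∧
      ∀ x' ∈ U, ∀ y' ∈ V, s x' = r y' → mul x' y' ∈ W
  etale : ∀ x : G, ∃ U : Set G, IsOpen U ∧ x ∈ U ∧ Set.InjOn r U ∧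
    ∀ V : Set G, V ⊆ U → IsOpen V → IsOpen (r '' V)

namespace EtaleGroupoid

variable {G : Type} [TopologicalSpace G] [MeasurableSpace G]

/-- The unit space `𝒢⁽⁰⁾`. -/
def units (g : EtaleGroupoid G) : Set G := Set.range g.r

/-- The range fibre `𝒢^u = r⁻¹(u)`. -/
def rFiber (g : EtaleGroupoid G) (u : G) : Set G := {x | g.r x = u}

/-- The source fibre `𝒢_u = s⁻¹(u)`. -/
def sFiber (g : EtaleGroupoid G) (u : G) : Set G := {x | g.s x = u}

/-- Membership in `C_c(𝒢)`: continuous with compact support. -/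
def IsCc (_g : EtaleGroupoid G) (f : G → ℂ) : Prop := Continuous f ∧ HasCompactSupport f

/-- Convolution: `(f * h)(x) = Σ_{y ∈ 𝒢^{r(x)}} f(y) h(y⁻¹ x)`. -/
def conv (g : EtaleGroupoid G) (f h : G → ℂ) : G → ℂ :=
  fun x => ∑' y : g.rFiber (g.r x), f (y : G) * h (g.mul (g.inv (y : G)) x)

/-- The involution `f^*(x) = conj (f (x⁻¹))`. -/
def star' (g : EtaleGroupoid G) (f : G → ℂ) : G → ℂ := fun x => conj (f (g.inv x))

/-- Iterated convolution powers: `convIter g h n = h^{*(n+1)}`. -/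
def convIter (g : EtaleGroupoid G) (h : G → ℂ) : ℕ → G → ℂ
  | 0 => h
  | n + 1 => g.conv (convIter g h n) h

/-- `B(𝒢)`: bounded Borel functions. -/
def BG (_g : EtaleGroupoid G) : Set (G → ℂ) := {f | Measurable f ∧ BddFun f}

/-- `B_c(𝒢)`: compactly supported bounded Borel functions. -/
def Bc (_g : EtaleGroupoid G) : Set (G → ℂ) :=
  {f | Measurable f ∧ BddFun f ∧ HasCompactSupport f}

/-- `B_{0,l}(𝒢)`: bounded Borel functions which are locally `B₀`, i.e. whose
restriction to `𝒢(K)` vanishes at infinity for every compact `K ⊆ 𝒢⁽⁰⁾`. -/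
def B0l (g : EtaleGroupoid G) : Set (G → ℂ) :=
  {f | Measurable f ∧ BddFun f ∧
    ∀ K : Set G, K ⊆ g.units → IsCompact K → ∀ ε : ℝ, 0 < ε →
      ∃ C : Set G, IsCompact C ∧ ∀ x : G, g.r x ∈ K → g.s x ∈ K → x ∉ C → ‖f x‖ < ε}

/-- An algebraic ideal `D ⊴ B(𝒢)`. -/
structure IsBorelIdeal (g : EtaleGroupoid G) (D : Set (G → ℂ)) : Prop where
  subset_BG : D ⊆ g.BG
  add_mem : ∀ f ∈ D, ∀ h ∈ D, f + h ∈ D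
  smul_mem : ∀ f ∈ D, ∀ c : ℂ, c • f ∈ D
  mul_mem : ∀ f ∈ D, ∀ h ∈ g.BG, h * f ∈ D

/-- A positive definite function on the groupoid. -/
def IsPosDef (g : EtaleGroupoid G) (F : G → ℂ) : Prop :=
  ∀ u ∈ g.units, ∀ n : ℕ, ∀ x : Fin n → G, (∀ i, x i ∈ g.rFiber u) → ∀ c : Fin n → ℂ,
    0 ≤ (∑ i, ∑ j, conj (c i) * c j * F (g.mul (g.inv (x i)) (x j))).re ∧
    (∑ i, ∑ j, conj (c i) * c j * F (g.mul (g.inv (x i)) (x j))).im = 0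

/-- A function is locally `C₀` (in norm) : restriction to `𝒢(K)` vanishes at
infinity for every compact `K ⊆ 𝒢⁽⁰⁾`. -/
def IsLocallyC0 (g : EtaleGroupoid G) (F : G → ℂ) : Prop :=
  ∀ K : Set G, K ⊆ g.units → IsCompact K → ∀ ε : ℝ, 0 < ε →
    ∃ C : Set G, IsCompact C ∧ ∀ x : G, g.r x ∈ K → g.s x ∈ K → x ∉ C → ‖F x‖ < ε

/-- The Haagerup property for an étale groupoid. -/
def HaagerupProperty (g : EtaleGroupoid G) : Prop :=
  ∃ F : ℕ → G → ℂ, (∀ n, Continuous (F n)) ∧ (∀ n, g.IsPosDef (F n)) ∧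
    (∀ n, ∀ u ∈ g.units, F n u = 1) ∧
    (∀ K : Set G, IsCompact K → ∀ ε : ℝ, 0 < ε →
      ∃ N : ℕ, ∀ n : ℕ, N ≤ n → ∀ x ∈ K, ‖F n x - 1‖ < ε) ∧
    (∀ n, Continuous (F n) ∧ g.IsLocallyC0 (F n))

/-- The lower integral of `F` against the induced measure `ν`:
`∫ F dν = ∫_{𝒢⁽⁰⁾} Σ_{x ∈ 𝒢^u} F(x) dμ(u)`. -/
def fiberL (g : EtaleGroupoid G) (μ : Measure G) (F : G → ℝ≥0∞) : ℝ≥0∞ :=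
  ∫⁻ u, ∑' x : g.rFiber u, F (x : G) ∂μ

/-- The lower integral of `F` against `ν⁻¹` (source fibres). -/
def fiberLs (g : EtaleGroupoid G) (μ : Measure G) (F : G → ℝ≥0∞) : ℝ≥0∞ :=
  ∫⁻ u, ∑' x : g.sFiber u, F (x : G) ∂μ

/-- The induced measure `ν` of a set. -/
def nu (g : EtaleGroupoid G) (μ : Measure G) (E : Set G) : ℝ≥0∞ :=
  g.fiberL μ (E.indicator 1)

/-- `μ` is a quasi-invariant probability measure on the unit space: the induced
measure `ν` and its image `ν⁻¹` under inversion are mutually absolutely continuous. -/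
def IsQuasiInvariant (g : EtaleGroupoid G) (μ : Measure G) : Prop :=
  IsProbabilityMeasure μ ∧ μ g.unitsᶜ = 0 ∧
    ∀ E : Set G, MeasurableSet E → (g.nu μ E = 0 ↔ g.nu μ (g.inv ⁻¹' E) = 0)

/-- `μ` is an invariant probability measure on the unit space: `ν = ν⁻¹`. -/
def IsInvariant (g : EtaleGroupoid G) (μ : Measure G) : Prop :=
  IsProbabilityMeasure μ ∧ μ g.unitsᶜ = 0 ∧
    ∀ E : Set G, MeasurableSet E → g.nu μ E = g.nu μ (g.inv ⁻¹' E)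

/-- A modular function (Radon–Nikodym derivative `Δ = dν/dν⁻¹`), chosen to be a
Borel homomorphism. -/
structure IsModular (g : EtaleGroupoid G) (μ : Measure G) (Δ : G → ℝ) : Prop where
  meas : Measurable Δ
  pos : ∀ x, 0 < Δ x
  hom : ∀ x y, g.s x = g.r y → Δ (g.mul x y) = Δ x * Δ y
  inv_eq : ∀ x, Δ (g.inv x) = (Δ x)⁻¹
  rn : ∀ F : G → ℝ≥0∞, Measurable F →
    g.fiberL μ F = g.fiberLs μ fun x => F x * ENNReal.ofReal (Δ x)

end EtaleGroupoid

/-- A unitary representation of the groupoid on a Borel Hilbert bundle.  The fibres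
are realized as (closed) subspaces of an ambient Hilbert space `E`; `op x` is a
unitary `H(s x) → H(r x)`, the assignment is a Borel homomorphism (Borel-ness being
expressed through the matrix coefficients of a fundamental sequence of Borel
sections of the bundle). -/
structure GRep {G : Type} [TopologicalSpace G] [MeasurableSpace G] (g : EtaleGroupoid G)
    (E : Type) [NormedAddCommGroup E] [InnerProductSpace ℂ E] [MeasurableSpace E] where
  fib : G → Submodule ℂ E
  op : G → E → E
  mapsTo : ∀ x : G, ∀ v ∈ fib (g.s x), op x v ∈ fib (g.r x)
  map_add : ∀ x : G, ∀ v ∈ fib (g.s x), ∀ w ∈ fib (g.s x), op x (v + w) = op x v + op x w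
  map_smul : ∀ x : G, ∀ c : ℂ, ∀ v ∈ fib (g.s x), op x (c • v) = c • op x v
  inner_op : ∀ x : G, ∀ v ∈ fib (g.s x), ∀ w ∈ fib (g.s x),
    (inner ℂ (op x v) (op x w) : ℂ) = (inner ℂ v w : ℂ)
  surj' : ∀ x : G, ∀ w ∈ fib (g.r x), ∃ v ∈ fib (g.s x), op x v = w
  mul_op : ∀ x y : G, g.s x = g.r y → ∀ v ∈ fib (g.s y), op (g.mul x y) v = op x (op y v)
  unit_op : ∀ u ∈ g.units, ∀ v ∈ fib u, op u v = v
  fundSeq : ℕ → G → E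
  fundSeq_mem : ∀ n : ℕ, ∀ u ∈ g.units, fundSeq n u ∈ fib u
  fundSeq_meas : ∀ n : ℕ, Measurable (fundSeq n)
  fundSeq_dense : ∀ u ∈ g.units, ∀ v ∈ fib u, ∀ ε : ℝ, 0 < ε →
    ∃ w ∈ Submodule.span ℂ (Set.range fun n => fundSeq n u), ‖v - w‖ < ε
  fund_coeff_meas : ∀ n m : ℕ,
    Measurable fun x : G => (inner ℂ (fundSeq m (g.r x)) (op x (fundSeq n (g.s x))) : ℂ)

namespace GRep

variable {G : Type} [TopologicalSpace G] [MeasurableSpace G] {g : EtaleGroupoid G}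
variable {E : Type} [NormedAddCommGroup E] [InnerProductSpace ℂ E] [MeasurableSpace E]

/-- The matrix coefficient `x ↦ ⟨π(x) ξ(s x), η(r x)⟩` (linear in `ξ`). -/
def coeff (π : GRep g E) (ξ η : G → E) : G → ℂ :=
  fun x => (inner ℂ (η (g.r x)) (π.op x (ξ (g.s x))) : ℂ)

/-- A fundamental sequence of Borel sections of the bundle of `π`. -/
structure IsFundSeq (π : GRep g E) (f : ℕ → G → E) : Prop where
  mem : ∀ n : ℕ, ∀ u ∈ g.units, f n u ∈ π.fib u
  meas : ∀ n : ℕ, Measurable (f n)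
  dense : ∀ u ∈ g.units, ∀ v ∈ π.fib u, ∀ ε : ℝ, 0 < ε →
    ∃ w ∈ Submodule.span ℂ (Set.range fun n => f n u), ‖v - w‖ < ε
  coeff_meas : ∀ n m : ℕ, Measurable (π.coeff (f n) (f m))

/-- `π` is a `D`-representation: some fundamental sequence has all its matrix
coefficients in `D`. -/
def IsDRep (π : GRep g E) (D : Set (G → ℂ)) : Prop :=
  ∃ f : ℕ → G → E, π.IsFundSeq f ∧ ∀ n m : ℕ, π.coeff (f n) (f m) ∈ D

/-- A square-integrable Borel section of the bundle of `π`, i.e. a vector of the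
direct integral `∫^⊕ H_π(u) dμ(u)`. -/
structure IsL2Section (π : GRep g E) (μ : MeasureTheory.Measure G) (ξ : G → E) : Prop where
  mem : ∀ u ∈ g.units, ξ u ∈ π.fib u
  meas : Measurable ξ
  sq : MeasureTheory.Integrable (fun u => ‖ξ u‖ ^ 2) μ

/-- `⟨π_μ(f) ξ, η⟩ = ∫_𝒢 f(x) ⟨π(x)ξ(s x), η(r x)⟩ Δ(x)^{-1/2} dν(x)`, the
sesquilinear pairing of the integrated form of `π` w.r.t. `μ` (with modular
function `Δ`). -/
def pairing (π : GRep g E) (μ : MeasureTheory.Measure G) (Δ : G → ℝ) (f : G → ℂ)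
    (ξ η : G → E) : ℂ :=
  ∫ u, (∑' x : g.rFiber u,
    f (x : G) * ((Δ (x : G) ^ (-(1 / 2) : ℝ) : ℝ) : ℂ) * π.coeff ξ η (x : G)) ∂μ

/-- The operator norm `‖π_μ(f)‖` of the integrated form, expressed as the supremum
of the pairings over the unit ball of (the dense subspace of square-integrable
Borel sections of) the direct integral. -/
def intNorm (π : GRep g E) (μ : MeasureTheory.Measure G) (Δ : G → ℝ) (f : G → ℂ) : ℝ :=
  sSup {t : ℝ | ∃ ξ η : G → E, π.IsL2Section μ ξ ∧ π.IsL2Section μ η ∧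
    (∫ u, ‖ξ u‖ ^ 2 ∂μ) ≤ 1 ∧ (∫ u, ‖η u‖ ^ 2 ∂μ) ≤ 1 ∧
    t = ‖π.pairing μ Δ f ξ η‖}

end GRep

namespace EtaleGroupoid

variable {G : Type} [TopologicalSpace G] [MeasurableSpace G]

/-- The set of quasi-invariant probability measures on the unit space. -/
def QIMeasures (g : EtaleGroupoid G) : Set (MeasureTheory.Measure G) :=
  {μ | g.IsQuasiInvariant μ}

/-- The seminorm `‖f‖_{D,ℳ} = sup {‖π_μ(f)‖ : π a D-representation, μ ∈ ℳ}`. -/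
def DNorm (g : EtaleGroupoid G) (D : Set (G → ℂ)) (M : Set (MeasureTheory.Measure G))
    (f : G → ℂ) : ℝ :=
  sSup {t : ℝ | ∃ π : GRep g Hamb, π.IsDRep D ∧ ∃ μ ∈ M, ∃ Δ : G → ℝ,
    g.IsModular μ Δ ∧ t = π.intNorm μ Δ f}

/-- The full norm `‖f‖_max = sup {‖π_μ(f)‖ : π any representation, μ quasi-invariant}`. -/
def maxNorm (g : EtaleGroupoid G) (f : G → ℂ) : ℝ :=
  sSup {t : ℝ | ∃ π : GRep g Hamb, ∃ μ ∈ g.QIMeasures, ∃ Δ : G → ℝ,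
    g.IsModular μ Δ ∧ t = π.intNorm μ Δ f}

/-- `‖Ind(δ_u)(f)‖`: the norm of left convolution by `f` on `ℓ²(𝒢_u)`, expressed as a
supremum of pairings against finitely supported vectors in the unit ball. -/
def IndDeltaNorm (g : EtaleGroupoid G) (u : G) (f : G → ℂ) : ℝ :=
  sSup {t : ℝ | ∃ ξ η : G → ℂ,
    (Function.support ξ).Finite ∧ Function.support ξ ⊆ g.sFiber u ∧
    (Function.support η).Finite ∧ Function.support η ⊆ g.sFiber u ∧
    (∑' x : g.sFiber u, ‖ξ (x : G)‖ ^ 2) ≤ 1 ∧ (∑' x : g.sFiber u, ‖η (x : G)‖ ^ 2) ≤ 1 ∧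
    t = ‖∑' x : g.sFiber u, g.conv f ξ (x : G) * conj (η (x : G))‖}

/-- The reduced norm `‖f‖_r = sup_{u ∈ 𝒢⁽⁰⁾} ‖Ind(δ_u)(f)‖`. -/
def redNorm (g : EtaleGroupoid G) (f : G → ℂ) : ℝ :=
  sSup {t : ℝ | ∃ u ∈ g.units, t = g.IndDeltaNorm u f}

/-- `‖Ind(μ)(f)‖`: the norm of left convolution by `f` on `L²(𝒢, ν⁻¹)`, expressed as a
supremum of pairings against bounded compactly supported Borel functions in the unit
ball of `L²(𝒢, ν⁻¹)`. -/
def IndMuNorm (g : EtaleGroupoid G) (μ : MeasureTheory.Measure G) (f : G → ℂ) : ℝ :=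
  sSup {t : ℝ | ∃ ξ η : G → ℂ, Measurable ξ ∧ Measurable η ∧ BddFun ξ ∧ BddFun η ∧
    HasCompactSupport ξ ∧ HasCompactSupport η ∧
    (∫ u, (∑' x : g.sFiber u, ‖ξ (x : G)‖ ^ 2) ∂μ) ≤ 1 ∧
    (∫ u, (∑' x : g.sFiber u, ‖η (x : G)‖ ^ 2) ∂μ) ≤ 1 ∧
    t = ‖∫ u, (∑' x : g.sFiber u, g.conv f ξ (x : G) * conj (η (x : G))) ∂μ‖}

/-- The norm of `L²(𝒢, ν⁻¹)`. -/
def L2s (g : EtaleGroupoid G) (μ : MeasureTheory.Measure G) (h : G → ℂ) : ℝ :=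
  Real.sqrt (∫ u, (∑' x : g.sFiber u, ‖h (x : G)‖ ^ 2) ∂μ)

/-- Products of `n` elements of `S` (units for `n = 0`). -/
def Spow (g : EtaleGroupoid G) (S : Set G) : ℕ → Set G
  | 0 => g.units
  | n + 1 => {z | ∃ x ∈ S, ∃ y ∈ Spow g S n, g.s x = g.r y ∧ z = g.mul x y}

/-- The ball `∪_{k ≤ n} S^k`. -/
def ball (g : EtaleGroupoid G) (S : Set G) (n : ℕ) : Set G :=
  ⋃ k ∈ Finset.range (n + 1), g.Spow S k

/-- The length function `l_S(x) = min {n ≥ 0 : x ∈ ∪_{k ≤ n} S^k}`. -/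
def lS (g : EtaleGroupoid G) (S : Set G) (x : G) : ℕ := sInf {n : ℕ | x ∈ g.ball S n}

/-- The fibre Cayley-graph metric `d(x, y) = l_S (x⁻¹ y)` (as a real number). -/
def dS (g : EtaleGroupoid G) (S : Set G) (x y : G) : ℝ := (g.lS S (g.mul (g.inv x) y) : ℝ)

/-- `S` is a compact open symmetric generating set making all fibre Cayley graphs
`δ`-hyperbolic; i.e. `𝒢` is a hyperbolic groupoid (witnessed by `S` and `δ`). -/
structure IsHyperbolicGen (g : EtaleGroupoid G) (S : Set G) (δ : ℝ) : Prop where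
  compact : IsCompact S
  isOpen : IsOpen S
  symm : ∀ x ∈ S, g.inv x ∈ S
  gen : ∀ x : G, ∃ n : ℕ, 1 ≤ n ∧ x ∈ g.Spow S n
  delta_pos : 0 < δ
  hyp : ∀ u ∈ g.units, ∀ a ∈ g.rFiber u, ∀ b ∈ g.rFiber u, ∀ c ∈ g.rFiber u,
    ∀ d ∈ g.rFiber u,
      g.dS S a b + g.dS S c d ≤ max (g.dS S a c + g.dS S b d) (g.dS S a d + g.dS S b c) + δ

/-- The ideal `ℒ^p_μ(𝒢)` of bounded Borel functions which are `p`-integrable for the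
induced measure `ν`. -/
def LpIdeal (g : EtaleGroupoid G) (μ : MeasureTheory.Measure G) (p : ℝ) : Set (G → ℂ) :=
  {f | Measurable f ∧ BddFun f ∧
    g.fiberL μ (fun x => ENNReal.ofReal (‖f x‖ ^ p)) ≠ ⊤}

/-- The `ℒ^p_μ`-seminorm `|f|_p`. -/
def lpSeminorm (g : EtaleGroupoid G) (μ : MeasureTheory.Measure G) (p : ℝ) (f : G → ℂ) : ℝ :=
  ((g.fiberL μ fun x => ENNReal.ofReal (‖f x‖ ^ p)).toReal) ^ (1 / p)

/-- `‖f‖_{ℒ^p_μ(𝒢), μ}`: the supremum of `‖π_μ(f)‖` over all `ℒ^p_μ(𝒢)`-representations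
(for an invariant `μ`, so `Δ ≡ 1`). -/
def LpDNorm (g : EtaleGroupoid G) (μ : MeasureTheory.Measure G) (p : ℝ) (f : G → ℂ) : ℝ :=
  sSup {t : ℝ | ∃ π : GRep g Hamb, π.IsDRep (g.LpIdeal μ p) ∧
    t = π.intNorm μ (fun _ => 1) f}

end EtaleGroupoid

section Statements

variable {G : Type} [TopologicalSpace G] [T2Space G] [SecondCountableTopology G]
  [LocallyCompactSpace G] [MeasurableSpace G] [BorelSpace G]

/-- A bisection: a subset of `𝒢` on which both the range and source maps are injective. -/
def IsBisection (g : EtaleGroupoid G) (U : Set G) : Prop :=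
  Set.InjOn g.r U ∧ Set.InjOn g.s U


namespace B0lAux

open Function Set

variable {G : Type} [TopologicalSpace G] [MeasurableSpace G]

set_option linter.unusedSectionVars false

theorem r_inv (g : EtaleGroupoid G) (x : G) : g.r (g.inv x) = g.s x := by
  have h1 := g.s_inv (g.inv x)
  rw [g.inv_inv] at h1
  exact h1.symm

theorem r_unit (g : EtaleGroupoid G) (x : G) : g.r (g.r x) = g.r x := by
  have h1 := g.r_mul x (g.inv x) (r_inv g x).symm
  rwa [← g.r_def x] at h1

theorem s_mem_units (g : EtaleGroupoid G) (x : G) : g.s x ∈ g.units :=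
  ⟨g.inv x, r_inv g x⟩

theorem mul_inv_left (g : EtaleGroupoid G) {y x : G} (hyp : g.r y = g.r x) :
    g.mul y (g.mul (g.inv y) x) = x := by
  have := g.inv_mul_cancel' (g.inv y) x (by rw [g.s_inv y, hyp])
  rwa [g.inv_inv] at this

theorem r_mul_inv_left (g : EtaleGroupoid G) {y x : G} (hyp : g.r y = g.r x) :
    g.r (g.mul (g.inv y) x) = g.s y := by
  rw [g.r_mul _ _ ((g.s_inv y).trans hyp), r_inv]

theorem s_mul_inv_left (g : EtaleGroupoid G) {y x : G} (hyp : g.r y = g.r x) :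
    g.s (g.mul (g.inv y) x) = g.s x :=
  g.s_mul _ _ ((g.s_inv y).trans hyp)

theorem eq_mul_inv (g : EtaleGroupoid G) {y x : G} (hyp : g.r y = g.r x) :
    g.mul x (g.inv (g.mul (g.inv y) x)) = y := by
  have h1 : g.mul y (g.mul (g.inv y) x) = x := mul_inv_left g hyp
  have h2 : g.s y = g.r (g.mul (g.inv y) x) := (r_mul_inv_left g hyp).symm
  have h3 := g.mul_inv_cancel' y (g.mul (g.inv y) x) h2
  rw [h1] at h3
  exact h3

theorem comp_inv_right (g : EtaleGroupoid G) {z x : G} (hz : g.s z = g.s x) :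
    g.s x = g.r (g.inv z) := by rw [r_inv, hz]

theorem r_mul_inv_right (g : EtaleGroupoid G) {z x : G} (hz : g.s z = g.s x) :
    g.r (g.mul x (g.inv z)) = g.r x :=
  g.r_mul x (g.inv z) (comp_inv_right g hz)

theorem s_mul_inv_right (g : EtaleGroupoid G) {z x : G} (hz : g.s z = g.s x) :
    g.s (g.mul x (g.inv z)) = g.r z := by
  rw [g.s_mul x (g.inv z) (comp_inv_right g hz), g.s_inv]

theorem mul_mul_inv (g : EtaleGroupoid G) {z x : G} (hz : g.s z = g.s x) :
    g.mul (g.mul x (g.inv z)) z = x := by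
  have := g.mul_inv_cancel' x (g.inv z) (comp_inv_right g hz)
  rwa [g.inv_inv] at this

theorem inv_mul_of (g : EtaleGroupoid G) {z x : G} (hz : g.s z = g.s x) :
    g.mul (g.inv (g.mul x (g.inv z))) x = z := by
  have h1 : g.mul (g.mul x (g.inv z)) z = x := mul_mul_inv g hz
  have h2 : g.s (g.mul x (g.inv z)) = g.r z := s_mul_inv_right g hz
  have h3 := g.inv_mul_cancel' (g.mul x (g.inv z)) z h2
  rwa [h1] at h3

theorem continuousOn_mul (g : EtaleGroupoid G) :
    ContinuousOn (fun p : G × G => g.mul p.1 p.2) {p : G × G | g.s p.1 = g.r p.2} := by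
  intro p hp
  refine tendsto_nhds.2 fun W hW hmem => ?_
  obtain ⟨U, V, hU, hV, hxU, hyV, hUV⟩ := g.continuous_mul p.1 p.2 hp W hW hmem
  rw [mem_nhdsWithin]
  exact ⟨U ×ˢ V, hU.prod hV, ⟨hxU, hyV⟩, fun q hq => hUV q.1 hq.1.1 q.2 hq.1.2 hq.2⟩

/-- The set of products of composable pairs from `A × B`. -/
def mulSet (g : EtaleGroupoid G) (A B : Set G) : Set G :=
  (fun p : G × G => g.mul p.1 p.2) '' ((A ×ˢ B) ∩ {p : G × G | g.s p.1 = g.r p.2})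

theorem isCompact_mulSet [T2Space G] (g : EtaleGroupoid G) {A B : Set G}
    (hA : IsCompact A) (hB : IsCompact B) : IsCompact (mulSet g A B) :=
  ((hA.prod hB).inter_right (isClosed_eq (g.continuous_s.comp continuous_fst)
    (g.continuous_r.comp continuous_snd))).image_of_continuousOn
    ((continuousOn_mul g).mono Set.inter_subset_right)

theorem mem_mulSet (g : EtaleGroupoid G) {A B : Set G} {a b : G}
    (ha : a ∈ A) (hb : b ∈ B) (hc : g.s a = g.r b) : g.mul a b ∈ mulSet g A B :=
  ⟨(a, b), ⟨⟨ha, hb⟩, hc⟩, rfl⟩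

theorem summable_of_unique {ι : Type} (F : ι → ℂ)
    (h : ∀ i j, F i ≠ 0 → F j ≠ 0 → i = j) : Summable F := by
  by_cases hex : ∃ a, F a ≠ 0
  · obtain ⟨a, ha⟩ := hex
    exact summable_of_ne_finset_zero (s := {a}) fun b hb => by
      by_contra hFb
      exact hb (Finset.mem_singleton.2 (h b a hFb ha))
  · push_neg at hex
    exact summable_zero.congr fun i => (hex i).symm

theorem norm_tsum_le_of_unique {ι : Type} (F : ι → ℂ) {M : ℝ} (hM : 0 ≤ M)
    (hb : ∀ i, ‖F i‖ ≤ M) (h : ∀ i j, F i ≠ 0 → F j ≠ 0 → i = j) :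
    ‖∑' i, F i‖ ≤ M := by
  by_cases hex : ∃ a, F a ≠ 0
  · obtain ⟨a, ha⟩ := hex
    rw [tsum_eq_single a fun b hba => by_contra fun hFb => hba (h b a hFb ha)]
    exact hb a
  · push_neg at hex
    have h0 : ∑' i, F i = 0 := by rw [tsum_congr hex, tsum_zero]
    rw [h0, norm_zero]; exact hM

theorem measurable_indicator_of_subtype {X : Type} [MeasurableSpace X] {s : Set X}
    (hs : MeasurableSet s) {F : X → ℂ} (h : Measurable fun x : s => F (x : X)) :
    Measurable (s.indicator F) := by
  have heq : s.indicator F =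
      Function.extend (Subtype.val : s → X) (fun x : s => F (x : X)) (fun _ => 0) := by
    funext x
    by_cases hx : x ∈ s
    · rw [Set.indicator_of_mem hx]
      exact (Subtype.val_injective.extend_apply (fun x : s => F (x : X)) (fun _ => 0)
        ⟨x, hx⟩).symm
    · rw [Set.indicator_of_notMem hx,
        Function.extend_apply' _ _ _ (by rintro ⟨a, rfl⟩; exact hx a.2)]
  rw [heq]
  exact (MeasurableEmbedding.subtype_coe hs).measurable_extend h measurable_const

theorem continuousOn_invFunOn [Nonempty G] {ρ : G → G} {O : Set G}
    (hO : IsOpen O) (hinj : Set.InjOn ρ O)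
    (himg : ∀ V ⊆ O, IsOpen V → IsOpen (ρ '' V)) :
    ContinuousOn (Function.invFunOn ρ O) (ρ '' O) := by
  rw [continuousOn_iff']
  intro t ht
  refine ⟨ρ '' (t ∩ O), himg _ Set.inter_subset_right (ht.inter hO), ?_⟩
  ext u
  constructor
  · rintro ⟨hu1, hu2⟩
    obtain ⟨y, hyO, hyu⟩ := hu2
    have hmem := Function.invFunOn_mem (f := ρ) (s := O) ⟨y, hyO, hyu⟩
    have heq := Function.invFunOn_eq (f := ρ) (s := O) ⟨y, hyO, hyu⟩
    exact ⟨⟨_, ⟨hu1, hmem⟩, heq⟩, ⟨y, hyO, hyu⟩⟩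
  · rintro ⟨⟨y, ⟨hyt, hyO⟩, rfl⟩, hu2⟩
    have hmem := Function.invFunOn_mem (f := ρ) (s := O) ⟨y, hyO, rfl⟩
    have heq := Function.invFunOn_eq (f := ρ) (s := O) ⟨y, hyO, rfl⟩
    have hfix : Function.invFunOn ρ O (ρ y) = y := hinj hmem hyO heq
    exact ⟨by rw [Set.mem_preimage, hfix]; exact hyt, ⟨y, hyO, rfl⟩⟩

theorem etale_s (g : EtaleGroupoid G) (x : G) :
    ∃ O : Set G, IsOpen O ∧ x ∈ O ∧ Set.InjOn g.s O ∧
      ∀ V ⊆ O, IsOpen V → IsOpen (g.s '' V) := by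
  obtain ⟨U, hUo, hmem, hinj, himg⟩ := g.etale (g.inv x)
  refine ⟨g.inv ⁻¹' U, hUo.preimage g.continuous_inv, hmem, ?_, ?_⟩
  · intro a ha b hb hab
    have h1 : g.r (g.inv a) = g.r (g.inv b) := by rw [r_inv, r_inv, hab]
    have h2 := hinj ha hb h1
    have := congrArg g.inv h2
    rwa [g.inv_inv, g.inv_inv] at this
  · intro V hVO hVopen
    have hsub : g.inv ⁻¹' V ⊆ U := fun z hz => by
      have := hVO hz
      rw [Set.mem_preimage] at this
      have h2 : g.inv (g.inv z) ∈ U := this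
      rwa [g.inv_inv] at h2
    have heq : g.s '' V = g.r '' (g.inv ⁻¹' V) := by
      ext u
      constructor
      · rintro ⟨v, hv, rfl⟩
        exact ⟨g.inv v, by rwa [Set.mem_preimage, g.inv_inv], r_inv g v⟩
      · rintro ⟨w, hw, rfl⟩
        exact ⟨g.inv w, hw, (g.s_inv w).symm ▸ (g.s_inv w)⟩
    rw [heq]
    exact himg _ hsub (hVopen.preimage g.continuous_inv)


theorem measurable_conv_indicator_r [BorelSpace G] [Nonempty G]
    (g : EtaleGroupoid G) (h f : G → ℂ) (hh : Measurable h) (hf : Measurable f)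
    {O E : Set G} (hO : IsOpen O) (hinj : Set.InjOn g.r O)
    (himg : ∀ V ⊆ O, IsOpen V → IsOpen (g.r '' V)) (hE : MeasurableSet E) (hEO : E ⊆ O) :
    Measurable (g.conv (E.indicator h) f) := by
  classical
  set σ : G → G := Function.invFunOn g.r O with hσdef
  set W : Set G := g.r ⁻¹' (g.r '' O) with hWdef
  have hWopen : IsOpen W := (himg O le_rfl hO).preimage g.continuous_r
  have key : ∀ x : G, x ∈ W → g.r (σ (g.r x)) = g.r x ∧ σ (g.r x) ∈ O := by
    intro x hx
    rw [hWdef, Set.mem_preimage] at hx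
    obtain ⟨y, hyO, hyx⟩ := hx
    exact ⟨Function.invFunOn_eq ⟨y, hyO, hyx⟩, Function.invFunOn_mem ⟨y, hyO, hyx⟩⟩
  have hconv : g.conv (E.indicator h) f = W.indicator
      (fun x => E.indicator h (σ (g.r x)) * f (g.mul (g.inv (σ (g.r x))) x)) := by
    funext x
    simp only [EtaleGroupoid.conv]
    by_cases hx : x ∈ W
    · rw [Set.indicator_of_mem hx]
      obtain ⟨hre, hmemO⟩ := key x hx
      have hval : (∑' y : g.rFiber (g.r x),
            E.indicator h (y : G) * f (g.mul (g.inv (y : G)) x))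
          = E.indicator h (σ (g.r x)) * f (g.mul (g.inv (σ (g.r x))) x) :=
        tsum_eq_single (⟨σ (g.r x), hre⟩ : g.rFiber (g.r x)) (by
        rintro ⟨b, hb⟩ hne
        show E.indicator h b * f (g.mul (g.inv b) x) = 0
        by_cases hbE : b ∈ E
        · exact absurd (Subtype.ext (hinj (hEO hbE) hmemO (by rw [hb, hre]))) hne
        · rw [Set.indicator_of_notMem hbE, zero_mul])
      exact hval
    · rw [Set.indicator_of_notMem hx]
      have hzero : ∀ y : g.rFiber (g.r x),
          E.indicator h (y : G) * f (g.mul (g.inv (y : G)) x) = 0 := by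
        rintro ⟨b, hb⟩
        show E.indicator h b * f (g.mul (g.inv b) x) = 0
        by_cases hbE : b ∈ E
        · exact absurd (show x ∈ W from ⟨b, hEO hbE, hb⟩) hx
        · rw [Set.indicator_of_notMem hbE, zero_mul]
      rw [tsum_congr hzero, tsum_zero]
  rw [hconv]
  refine measurable_indicator_of_subtype hWopen.measurableSet ?_
  have hσcont : Continuous fun x : W => σ (g.r (x : G)) :=
    (continuousOn_invFunOn hO hinj himg).comp_continuous
      (g.continuous_r.comp continuous_subtype_val) (fun x => x.2)
  have hmul : Continuous fun x : W => g.mul (g.inv (σ (g.r (x : G)))) (x : G) :=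
    (continuousOn_mul g).comp_continuous
      ((g.continuous_inv.comp hσcont).prodMk continuous_subtype_val)
      (fun x => by
        simp only [Set.mem_setOf_eq, Function.comp_apply]
        rw [g.s_inv, (key _ x.2).1])
  exact ((hh.indicator hE).comp hσcont.measurable).mul (hf.comp hmul.measurable)

theorem measurable_conv_indicator_s [BorelSpace G] [Nonempty G]
    (g : EtaleGroupoid G) (h f : G → ℂ) (hh : Measurable h) (hf : Measurable f)
    {O E : Set G} (hO : IsOpen O) (hinj : Set.InjOn g.s O)
    (himg : ∀ V ⊆ O, IsOpen V → IsOpen (g.s '' V)) (hE : MeasurableSet E) (hEO : E ⊆ O) :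
    Measurable (g.conv h (E.indicator f)) := by
  classical
  set σ : G → G := Function.invFunOn g.s O with hσdef
  set W : Set G := g.s ⁻¹' (g.s '' O) with hWdef
  have hWopen : IsOpen W := (himg O le_rfl hO).preimage g.continuous_s
  have key : ∀ x : G, x ∈ W → g.s (σ (g.s x)) = g.s x ∧ σ (g.s x) ∈ O := by
    intro x hx
    rw [hWdef, Set.mem_preimage] at hx
    obtain ⟨y, hyO, hyx⟩ := hx
    exact ⟨Function.invFunOn_eq ⟨y, hyO, hyx⟩, Function.invFunOn_mem ⟨y, hyO, hyx⟩⟩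
  have hconv : g.conv h (E.indicator f) = W.indicator
      (fun x => h (g.mul x (g.inv (σ (g.s x)))) * E.indicator f (σ (g.s x))) := by
    funext x
    simp only [EtaleGroupoid.conv]
    by_cases hx : x ∈ W
    · rw [Set.indicator_of_mem hx]
      obtain ⟨hse, hmemO⟩ := key x hx
      have ha : g.r (g.mul x (g.inv (σ (g.s x)))) = g.r x := r_mul_inv_right g hse
      have hval : (∑' y : g.rFiber (g.r x),
            h (y : G) * E.indicator f (g.mul (g.inv (y : G)) x))
          = h (g.mul x (g.inv (σ (g.s x)))) *
            E.indicator f (g.mul (g.inv (g.mul x (g.inv (σ (g.s x))))) x) :=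
        tsum_eq_single (⟨g.mul x (g.inv (σ (g.s x))), ha⟩ : g.rFiber (g.r x)) (by
        rintro ⟨b, hb⟩ hne
        show h b * E.indicator f (g.mul (g.inv b) x) = 0
        by_cases hbE : g.mul (g.inv b) x ∈ E
        · exfalso
          apply hne
          have hw : g.s (g.mul (g.inv b) x) = g.s (σ (g.s x)) := by
            rw [s_mul_inv_left g hb, hse]
          have hweq : g.mul (g.inv b) x = σ (g.s x) := hinj (hEO hbE) hmemO hw
          have hbval : g.mul x (g.inv (g.mul (g.inv b) x)) = b := eq_mul_inv g hb
          rw [hweq] at hbval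
          exact Subtype.ext hbval.symm
        · rw [Set.indicator_of_notMem hbE, mul_zero])
      rw [hval]
      congr 1
      rw [inv_mul_of g hse]
    · rw [Set.indicator_of_notMem hx]
      have hzero : ∀ y : g.rFiber (g.r x),
          h (y : G) * E.indicator f (g.mul (g.inv (y : G)) x) = 0 := by
        rintro ⟨b, hb⟩
        show h b * E.indicator f (g.mul (g.inv b) x) = 0
        by_cases hbE : g.mul (g.inv b) x ∈ E
        · exact absurd (show x ∈ W from ⟨g.mul (g.inv b) x, hEO hbE,
            s_mul_inv_left g hb⟩) hx
        · rw [Set.indicator_of_notMem hbE, mul_zero]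
      rw [tsum_congr hzero, tsum_zero]
  rw [hconv]
  refine measurable_indicator_of_subtype hWopen.measurableSet ?_
  have hσcont : Continuous fun x : W => σ (g.s (x : G)) :=
    (continuousOn_invFunOn hO hinj himg).comp_continuous
      (g.continuous_s.comp continuous_subtype_val) (fun x => x.2)
  have hmul : Continuous fun x : W => g.mul (x : G) (g.inv (σ (g.s (x : G)))) :=
    (continuousOn_mul g).comp_continuous
      (continuous_subtype_val.prodMk (g.continuous_inv.comp hσcont))
      (fun x => by
        simp only [Set.mem_setOf_eq, Function.comp_apply]
        rw [r_inv, (key _ x.2).1])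
  exact ((hh.comp hmul.measurable)).mul ((hf.indicator hE).comp hσcont.measurable)


theorem exists_idx (g : EtaleGroupoid G) (ρ : G → G)
    (het : ∀ x : G, ∃ O : Set G, IsOpen O ∧ x ∈ O ∧ Set.InjOn ρ O ∧
      ∀ V ⊆ O, IsOpen V → IsOpen (ρ '' V))
    {K₀ : Set G} (hK : IsCompact K₀) :
    ∃ (n : ℕ) (idx : ℕ → Set G),
      (∀ i, IsOpen (idx i) ∧ Set.InjOn ρ (idx i) ∧
        ∀ V ⊆ idx i, IsOpen V → IsOpen (ρ '' V)) ∧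
      (∀ x ∈ K₀, ∃ i, i < n ∧ x ∈ idx i) ∧ (∀ i, n ≤ i → idx i = ∅) := by
  classical
  choose O hOopen hOmem hOinj hOimg using het
  obtain ⟨t, ht⟩ := hK.elim_finite_subcover O hOopen
    (fun x _ => Set.mem_iUnion.2 ⟨x, hOmem x⟩)
  refine ⟨t.card,
    fun i => if hi : i < t.card then O ((t.equivFin.symm ⟨i, hi⟩) : G) else ∅, ?_, ?_, ?_⟩
  · intro i
    by_cases hi : i < t.card
    · simp only [dif_pos hi]
      exact ⟨hOopen _, hOinj _, hOimg _⟩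
    · simp only [dif_neg hi]
      exact ⟨isOpen_empty, fun a ha => absurd ha (Set.notMem_empty a),
        fun V hV _ => by
          rw [Set.subset_empty_iff.1 hV, Set.image_empty]; exact isOpen_empty⟩
  · intro x hx
    obtain ⟨y, hy⟩ := Set.mem_iUnion.1 (ht hx)
    rw [Set.mem_iUnion] at hy
    obtain ⟨hyt, hxO⟩ := hy
    refine ⟨(t.equivFin ⟨y, hyt⟩ : Fin t.card).val, (t.equivFin ⟨y, hyt⟩).isLt, ?_⟩
    simp only [dif_pos (t.equivFin ⟨y, hyt⟩).isLt]
    rw [Fin.eta, Equiv.symm_apply_apply]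
    exact hxO
  · intro i hi
    simp only [dif_neg (not_lt.2 hi)]

theorem sum_indicator_disjointed (idx : ℕ → Set G) (n : ℕ)
    (hempty : ∀ i, n ≤ i → idx i = ∅) (h : G → ℂ)
    (hcov : ∀ x ∈ Function.support h, ∃ i, i < n ∧ x ∈ idx i) (y : G) :
    h y = ∑ i ∈ Finset.range n, (disjointed idx i).indicator h y := by
  classical
  by_cases hy : h y = 0
  · rw [hy]
    symm
    refine Finset.sum_eq_zero fun i _ => ?_
    by_cases hm : y ∈ disjointed idx i
    · rw [Set.indicator_of_mem hm, hy]
    · rw [Set.indicator_of_notMem hm]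
  · obtain ⟨i0, hi0n, hmem⟩ := hcov y hy
    have hyu : y ∈ ⋃ j, disjointed idx j := by
      rw [iUnion_disjointed]
      exact Set.mem_iUnion.2 ⟨i0, hmem⟩
    obtain ⟨j, hj⟩ := Set.mem_iUnion.1 hyu
    have hjn : j < n := by
      by_contra hjn
      have h1 : y ∈ idx j := disjointed_subset idx j hj
      rw [hempty j (not_lt.1 hjn)] at h1
      exact absurd h1 (Set.notMem_empty y)
    symm
    rw [Finset.sum_eq_single_of_mem j (Finset.mem_range.2 hjn)
      (fun b _ hbj => Set.indicator_of_notMem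
        (fun hm => Set.disjoint_left.1 (disjoint_disjointed idx hbj) hm hj) h)]
    exact Set.indicator_of_mem hj h

end B0lAux

open B0lAux

/-- If `h ∈ C_c(𝒢)` is supported on a single bisection and
`f ∈ B_{0,l}(𝒢)`, then `h * f ∈ B_{0,l}(𝒢)`; likewise if `h ∈ B_{0,l}(𝒢)` and
`f ∈ C_c(𝒢)` is supported on a single bisection, then `h * f ∈ B_{0,l}(𝒢)`.
(Here `h ∈ B_{0,l}(𝒢)` if and only if `h* ∈ B_{0,l}(𝒢)`.) -/
theorem conv_bisection_preserves_B0l (g : EtaleGroupoid G) :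
    (∀ f h : G → ℂ, g.IsCc h →
      (∃ U : Set G, IsBisection g U ∧ Function.support h ⊆ U) →
      f ∈ g.B0l → g.conv h f ∈ g.B0l) ∧
    (∀ f h : G → ℂ, h ∈ g.B0l → g.IsCc f →
      (∃ U : Set G, IsBisection g U ∧ Function.support f ⊆ U) →
      g.conv h f ∈ g.B0l) ∧
    (∀ h : G → ℂ, h ∈ g.B0l ↔ g.star' h ∈ g.B0l) := by
  classical
  refine ⟨?_, ?_, ?_⟩
  · -- Part 1 : h ∈ C_c supported on a bisection, f ∈ B_{0,l}
    rintro f h ⟨hhc, hhs⟩ ⟨U, ⟨hUr, hUs⟩, hsupp⟩ ⟨hfm, ⟨Mf, hMf⟩, hfvan⟩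
    rcases isEmpty_or_nonempty G with hG | hG
    · exact ⟨Subsingleton.measurable, ⟨0, fun x => (IsEmpty.false x).elim⟩,
        fun K _ _ ε hε => ⟨∅, isCompact_empty, fun x => (IsEmpty.false x).elim⟩⟩
    obtain ⟨Mh, hMh0⟩ := hhs.exists_bound_of_continuous hhc
    set Mh' := max Mh 0 with hMh'def
    have hMh : ∀ x, ‖h x‖ ≤ Mh' := fun x => (hMh0 x).trans (le_max_left _ _)
    have hMh'0 : 0 ≤ Mh' := le_max_right _ _
    set Mf' := max Mf 0 with hMf'def
    have hMf' : ∀ x, ‖f x‖ ≤ Mf' := fun x => (hMf x).trans (le_max_left _ _)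
    have hMf'0 : 0 ≤ Mf' := le_max_right _ _
    have huniq : ∀ (x : G) (y₁ y₂ : g.rFiber (g.r x)),
        h (y₁ : G) * f (g.mul (g.inv (y₁ : G)) x) ≠ 0 →
        h (y₂ : G) * f (g.mul (g.inv (y₂ : G)) x) ≠ 0 → y₁ = y₂ := by
      intro x y₁ y₂ h1 h2
      have m1 : (y₁ : G) ∈ U := hsupp (left_ne_zero_of_mul h1)
      have m2 : (y₂ : G) ∈ U := hsupp (left_ne_zero_of_mul h2)
      have e1 : g.r (y₁ : G) = g.r x := y₁.2
      have e2 : g.r (y₂ : G) = g.r x := y₂.2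
      exact Subtype.ext (hUr m1 m2 (by rw [e1, e2]))
    obtain ⟨n, idx, hprop, hcov, hempty⟩ := exists_idx g g.r g.etale hhs
    have hcov' : ∀ x ∈ Function.support h, ∃ i, i < n ∧ x ∈ idx i :=
      fun x hx => hcov x (subset_closure hx)
    have hdecomp := sum_indicator_disjointed idx n hempty h hcov'
    have hsummable : ∀ (i : ℕ) (x : G), Summable fun y : g.rFiber (g.r x) =>
        (disjointed idx i).indicator h (y : G) * f (g.mul (g.inv (y : G)) x) := by
      intro i x
      apply summable_of_unique
      intro y₁ y₂ h1 h2
      have m1 : (y₁ : G) ∈ idx i :=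
        disjointed_subset idx i (Set.mem_of_indicator_ne_zero (left_ne_zero_of_mul h1))
      have m2 : (y₂ : G) ∈ idx i :=
        disjointed_subset idx i (Set.mem_of_indicator_ne_zero (left_ne_zero_of_mul h2))
      have e1 : g.r (y₁ : G) = g.r x := y₁.2
      have e2 : g.r (y₂ : G) = g.r x := y₂.2
      exact Subtype.ext ((hprop i).2.1 m1 m2 (by rw [e1, e2]))
    have hconv_eq : g.conv h f =
        fun x => ∑ i ∈ Finset.range n, g.conv ((disjointed idx i).indicator h) f x := by
      funext x
      simp only [EtaleGroupoid.conv]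
      rw [← Summable.tsum_finsetSum (fun i _ => hsummable i x)]
      refine tsum_congr fun y => ?_
      rw [← Finset.sum_mul, ← hdecomp (y : G)]
    have hmeas : Measurable (g.conv h f) := by
      rw [hconv_eq]
      exact Finset.measurable_sum _ fun i _ =>
        measurable_conv_indicator_r g h f hhc.measurable hfm (hprop i).1 (hprop i).2.1
          (hprop i).2.2 (MeasurableSet.disjointed (fun j => (hprop j).1.measurableSet) i)
          (disjointed_subset idx i)
    refine ⟨hmeas, ⟨Mh' * Mf', fun x => ?_⟩, ?_⟩
    · show ‖∑' y : g.rFiber (g.r x), h (y : G) * f (g.mul (g.inv (y : G)) x)‖ ≤ Mh' * Mf'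
      exact norm_tsum_le_of_unique _ (mul_nonneg hMh'0 hMf'0)
        (fun y => by
          rw [norm_mul]
          exact mul_le_mul (hMh _) (hMf' _) (norm_nonneg _) hMh'0)
        (huniq x)
    · intro K hKu hKc ε hε
      have hK₀c : IsCompact (tsupport h) := hhs
      set ε' := ε / (Mh' + 1) with hε'def
      have hε' : 0 < ε' := div_pos hε (by positivity)
      obtain ⟨C, hCc, hC⟩ := hfvan (K ∪ g.s '' tsupport h)
        (by rintro u (hu | ⟨y, _, rfl⟩); exacts [hKu hu, s_mem_units g y])
        (hKc.union (hK₀c.image g.continuous_s)) ε' hε'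
      refine ⟨mulSet g (tsupport h) C, isCompact_mulSet g hK₀c hCc, ?_⟩
      intro x hrx hsx hxC
      by_cases hex : ∃ y : g.rFiber (g.r x), h (y : G) * f (g.mul (g.inv (y : G)) x) ≠ 0
      · obtain ⟨y, hy⟩ := hex
        have htsum : g.conv h f x = h (y : G) * f (g.mul (g.inv (y : G)) x) := by
          simp only [EtaleGroupoid.conv]
          exact tsum_eq_single y fun b hb => by_contra fun hb0 => hb (huniq x b y hb0 hy)
        have hyK : (y : G) ∈ tsupport h := subset_closure (left_ne_zero_of_mul hy)
        have hry : g.r (y : G) = g.r x := y.2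
        have hrz : g.r (g.mul (g.inv (y : G)) x) = g.s (y : G) := r_mul_inv_left g hry
        have hsz : g.s (g.mul (g.inv (y : G)) x) = g.s x := s_mul_inv_left g hry
        have hzC : g.mul (g.inv (y : G)) x ∉ C := by
          intro hzC
          apply hxC
          have hm := mem_mulSet g hyK hzC hrz.symm
          rwa [mul_inv_left g hry] at hm
        have hfz : ‖f (g.mul (g.inv (y : G)) x)‖ < ε' :=
          hC _ (by rw [hrz]; exact Or.inr ⟨_, hyK, rfl⟩) (by rw [hsz]; exact Or.inl hsx) hzC
        have hle : ‖g.conv h f x‖ ≤ Mh' * ε' := by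
          rw [htsum, norm_mul]
          exact mul_le_mul (hMh _) hfz.le (norm_nonneg _) hMh'0
        have heq : (Mh' + 1) * ε' = ε := by
          rw [hε'def]
          field_simp
        have hlt : Mh' * ε' < ε := by
          rw [← heq]
          exact mul_lt_mul_of_pos_right (lt_add_one _) hε'
        exact hle.trans_lt hlt
      · push_neg at hex
        have h0 : g.conv h f x = 0 := by
          simp only [EtaleGroupoid.conv]
          rw [tsum_congr hex, tsum_zero]
        rw [h0, norm_zero]
        exact hε
  · -- Part 2 : h ∈ B_{0,l}, f ∈ C_c supported on a bisection
    rintro f h ⟨hhm, ⟨Mh, hMh0⟩, hhvan⟩ ⟨hfc, hfs⟩ ⟨U, ⟨hUr, hUs⟩, hsupp⟩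
    rcases isEmpty_or_nonempty G with hG | hG
    · exact ⟨Subsingleton.measurable, ⟨0, fun x => (IsEmpty.false x).elim⟩,
        fun K _ _ ε hε => ⟨∅, isCompact_empty, fun x => (IsEmpty.false x).elim⟩⟩
    obtain ⟨Mf, hMf0⟩ := hfs.exists_bound_of_continuous hfc
    set Mh' := max Mh 0 with hMh'def
    have hMh : ∀ x, ‖h x‖ ≤ Mh' := fun x => (hMh0 x).trans (le_max_left _ _)
    have hMh'0 : 0 ≤ Mh' := le_max_right _ _
    set Mf' := max Mf 0 with hMf'def
    have hMf' : ∀ x, ‖f x‖ ≤ Mf' := fun x => (hMf0 x).trans (le_max_left _ _)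
    have hMf'0 : 0 ≤ Mf' := le_max_right _ _
    have huniq : ∀ (x : G) (y₁ y₂ : g.rFiber (g.r x)),
        h (y₁ : G) * f (g.mul (g.inv (y₁ : G)) x) ≠ 0 →
        h (y₂ : G) * f (g.mul (g.inv (y₂ : G)) x) ≠ 0 → y₁ = y₂ := by
      intro x y₁ y₂ h1 h2
      have e1 : g.r (y₁ : G) = g.r x := y₁.2
      have e2 : g.r (y₂ : G) = g.r x := y₂.2
      have m1 : g.mul (g.inv (y₁ : G)) x ∈ U := hsupp (right_ne_zero_of_mul h1)
      have m2 : g.mul (g.inv (y₂ : G)) x ∈ U := hsupp (right_ne_zero_of_mul h2)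
      have hw : g.mul (g.inv (y₁ : G)) x = g.mul (g.inv (y₂ : G)) x :=
        hUs m1 m2 (by rw [s_mul_inv_left g e1, s_mul_inv_left g e2])
      apply Subtype.ext
      rw [← eq_mul_inv g e1, ← eq_mul_inv g e2, hw]
    obtain ⟨n, idx, hprop, hcov, hempty⟩ := exists_idx g g.s (etale_s g) hfs
    have hcov' : ∀ x ∈ Function.support f, ∃ i, i < n ∧ x ∈ idx i :=
      fun x hx => hcov x (subset_closure hx)
    have hdecomp := sum_indicator_disjointed idx n hempty f hcov'
    have hsummable : ∀ (i : ℕ) (x : G), Summable fun y : g.rFiber (g.r x) =>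
        h (y : G) * (disjointed idx i).indicator f (g.mul (g.inv (y : G)) x) := by
      intro i x
      apply summable_of_unique
      intro y₁ y₂ h1 h2
      have e1 : g.r (y₁ : G) = g.r x := y₁.2
      have e2 : g.r (y₂ : G) = g.r x := y₂.2
      have m1 : g.mul (g.inv (y₁ : G)) x ∈ idx i :=
        disjointed_subset idx i (Set.mem_of_indicator_ne_zero (right_ne_zero_of_mul h1))
      have m2 : g.mul (g.inv (y₂ : G)) x ∈ idx i :=
        disjointed_subset idx i (Set.mem_of_indicator_ne_zero (right_ne_zero_of_mul h2))
      have hw := (hprop i).2.1 m1 m2 (by rw [s_mul_inv_left g e1, s_mul_inv_left g e2])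
      apply Subtype.ext
      rw [← eq_mul_inv g e1, ← eq_mul_inv g e2, hw]
    have hconv_eq : g.conv h f =
        fun x => ∑ i ∈ Finset.range n, g.conv h ((disjointed idx i).indicator f) x := by
      funext x
      simp only [EtaleGroupoid.conv]
      rw [← Summable.tsum_finsetSum (fun i _ => hsummable i x)]
      refine tsum_congr fun y => ?_
      rw [← Finset.mul_sum, ← hdecomp (g.mul (g.inv (y : G)) x)]
    have hmeas : Measurable (g.conv h f) := by
      rw [hconv_eq]
      exact Finset.measurable_sum _ fun i _ =>
        measurable_conv_indicator_s g h f hhm hfc.measurable (hprop i).1 (hprop i).2.1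
          (hprop i).2.2 (MeasurableSet.disjointed (fun j => (hprop j).1.measurableSet) i)
          (disjointed_subset idx i)
    refine ⟨hmeas, ⟨Mh' * Mf', fun x => ?_⟩, ?_⟩
    · show ‖∑' y : g.rFiber (g.r x), h (y : G) * f (g.mul (g.inv (y : G)) x)‖ ≤ Mh' * Mf'
      exact norm_tsum_le_of_unique _ (mul_nonneg hMh'0 hMf'0)
        (fun y => by
          rw [norm_mul]
          exact mul_le_mul (hMh _) (hMf' _) (norm_nonneg _) hMh'0)
        (huniq x)
    · intro K hKu hKc ε hε
      have hK₀c : IsCompact (tsupport f) := hfs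
      set ε' := ε / (Mf' + 1) with hε'def
      have hε' : 0 < ε' := div_pos hε (by positivity)
      obtain ⟨C, hCc, hC⟩ := hhvan (K ∪ g.r '' tsupport f)
        (by rintro u (hu | ⟨y, _, rfl⟩); exacts [hKu hu, ⟨y, rfl⟩])
        (hKc.union (hK₀c.image g.continuous_r)) ε' hε'
      refine ⟨mulSet g C (tsupport f), isCompact_mulSet g hCc hK₀c, ?_⟩
      intro x hrx hsx hxC
      by_cases hex : ∃ y : g.rFiber (g.r x), h (y : G) * f (g.mul (g.inv (y : G)) x) ≠ 0
      · obtain ⟨y, hy⟩ := hex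
        have htsum : g.conv h f x = h (y : G) * f (g.mul (g.inv (y : G)) x) := by
          simp only [EtaleGroupoid.conv]
          exact tsum_eq_single y fun b hb => by_contra fun hb0 => hb (huniq x b y hb0 hy)
        have hzK : g.mul (g.inv (y : G)) x ∈ tsupport f :=
          subset_closure (right_ne_zero_of_mul hy)
        have hry : g.r (y : G) = g.r x := y.2
        have hrz : g.r (g.mul (g.inv (y : G)) x) = g.s (y : G) := r_mul_inv_left g hry
        have hyC : (y : G) ∉ C := by
          intro hyC
          apply hxC
          have hm := mem_mulSet g hyC hzK hrz.symm
          rwa [mul_inv_left g hry] at hm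
        have hhy : ‖h (y : G)‖ < ε' :=
          hC _ (by rw [hry]; exact Or.inl hrx) (Or.inr ⟨_, hzK, hrz⟩) hyC
        have hle : ‖g.conv h f x‖ ≤ ε' * Mf' := by
          rw [htsum, norm_mul]
          exact mul_le_mul hhy.le (hMf' _) (norm_nonneg _) hε'.le
        have heq : ε' * (Mf' + 1) = ε := by
          rw [hε'def]
          field_simp
        have hlt : ε' * Mf' < ε := by
          rw [← heq]
          exact mul_lt_mul_of_pos_left (lt_add_one _) hε'
        exact hle.trans_lt hlt
      · push_neg at hex
        have h0 : g.conv h f x = 0 := by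
          simp only [EtaleGroupoid.conv]
          rw [tsum_congr hex, tsum_zero]
        rw [h0, norm_zero]
        exact hε
  · -- Part 3 : closure under the involution
    have key : ∀ h : G → ℂ, h ∈ g.B0l → g.star' h ∈ g.B0l := by
      rintro h ⟨hm, ⟨M, hM⟩, hvan⟩
      refine ⟨?_, ⟨M, fun x => ?_⟩, ?_⟩
      · exact Complex.continuous_conj.measurable.comp (hm.comp g.continuous_inv.measurable)
      · show ‖(starRingEnd ℂ) (h (g.inv x))‖ ≤ M
        simpa using hM (g.inv x)
      · intro K hKu hKc ε hε
        obtain ⟨C, hCc, hC⟩ := hvan K hKu hKc ε hε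
        refine ⟨g.inv '' C, hCc.image g.continuous_inv, fun x hrx hsx hx => ?_⟩
        have h1 : g.r (g.inv x) ∈ K := by rw [r_inv g x]; exact hsx
        have h2 : g.s (g.inv x) ∈ K := by rw [g.s_inv]; exact hrx
        have h3 : g.inv x ∉ C := fun hmem => hx ⟨g.inv x, hmem, g.inv_inv x⟩
        show ‖(starRingEnd ℂ) (h (g.inv x))‖ < ε
        simpa using hC _ h1 h2 h3
    intro h
    constructor
    · exact key h
    · intro hs
      have h2 := key _ hs
      have heq : g.star' (g.star' h) = h := by
        funext x
        simp [EtaleGroupoid.star', g.inv_inv]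
      rwa [heq] at h2

end Statements
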